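/- Let H be a complex Hilbert space, V ⊆ H a subspace equipped with a norm ‖·‖ such that ‖v‖_H ≤ κ⁻¹‖v‖ for all v ∈ V with κ > 0, and a : V × V → ℂ a sesquilinear form satisfying Re a(v, v) = ‖v‖² − 2κ²‖v‖_H² for all v ∈ V. Let Q ⊆ H be a closed subspace with orthogonal projection Π : H → Q satisfying the approximation property ‖v − Πv‖_H ≤ (H̄/π)·(‖v‖² − κ²‖v‖_H²)^{1/2} for all v ∈ V, where H̄ > 0 satisfies the resolution condition κH̄ ≤ π/√2. Assume for every q ∈ Q there exists L*q ∈ V with a(w, L*q) = (w, q)_H for all w ∈ V. Let f ∈ H and let u ∈ V satisfy a(u, v) = (f, v)_H for all v ∈ V. Suppose u_H ∈ V is such that there exists g ∈ Q with a(u_H, v) = (g, v)_H for all v ∈ V, and u_H satisfies the Petrov–Galerkin equations a(u_H, L*q) = (f, L*q)_H for all q ∈ Q. Then ‖u − u_H‖ ≤ (√6/π)·H̄·‖f − Πf‖_H. -/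

import Mathlib

private lemma stmt_9_aux (s c F : ℝ) (hs0 : 0 ≤ s) (hF0 : 0 ≤ F)
    (h : s ^ 2 ≤ 2 * (c * s * F)) : s ^ 2 ≤ 4 * c ^ 2 * F ^ 2 := by
  nlinarith [sq_nonneg (s - 2 * c * F)]

/-- Abstract form of the κ-independent error estimate for the prototypical
Petrov–Galerkin method: under the resolution condition `κH̄ ≤ π/√2` and the
projection approximation property, `‖u − u_H‖ ≤ (√6/π)·H̄·‖f − Πf‖_H`. -/
theorem stmt_9 {Hs : Type*} [NormedAddCommGroup Hs] [InnerProductSpace ℂ Hs] [CompleteSpace Hs]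
    {V : Type*} [NormedAddCommGroup V] [NormedSpace ℂ V]
    (e : V →ₗ[ℂ] Hs) (he : Function.Injective e)
    (κ : ℝ) (hκ : 0 < κ) (hemb : ∀ v : V, ‖e v‖ ≤ κ⁻¹ * ‖v‖)
    (a : V →ₗ[ℂ] V →ₗ⋆[ℂ] ℂ)
    (hre : ∀ v : V, (a v v).re = ‖v‖ ^ 2 - 2 * κ ^ 2 * ‖e v‖ ^ 2)
    (Q : Submodule ℂ Hs) [CompleteSpace Q]
    (Hbar : ℝ) (hHbar : 0 < Hbar) (hres : κ * Hbar ≤ Real.pi / Real.sqrt 2)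
    (happrox : ∀ v : V, ‖e v - (Submodule.orthogonalProjection Q (e v) : Hs)‖ ≤
      (Hbar / Real.pi) * Real.sqrt (‖v‖ ^ 2 - κ ^ 2 * ‖e v‖ ^ 2))
    (Ls : Q → V) (hLs : ∀ q : Q, ∀ w : V, a w (Ls q) = (inner ℂ (q : Hs) (e w) : ℂ))
    (f : Hs)
    (u : V) (hu : ∀ w : V, a u w = (inner ℂ (e w) f : ℂ))
    (uH : V) (huHsrc : ∃ g ∈ Q, ∀ w : V, a uH w = (inner ℂ (e w) g : ℂ))
    (huH : ∀ q : Q, a uH (Ls q) = (inner ℂ (e (Ls q)) f : ℂ)) :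
    ‖u - uH‖ ≤ (Real.sqrt 6 / Real.pi) * Hbar * ‖f - (Submodule.orthogonalProjection Q f : Hs)‖ := by
  obtain ⟨g, hgQ, hg⟩ := huHsrc
  have hπ : (0:ℝ) < Real.pi := Real.pi_pos
  have hsplit : ∀ w : V, a (u - uH) w = a u w - a uH w := by
    intro w
    rw [map_sub]
    rfl
  -- orthogonality of the error to Q
  have hperp : ∀ q ∈ Q, (inner ℂ q (e (u - uH)) : ℂ) = 0 := by
    intro q hq
    have h1 := hLs ⟨q, hq⟩ (u - uH)
    have h2 : a (u - uH) (Ls ⟨q, hq⟩) = 0 := by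
      rw [hsplit, hu (Ls ⟨q, hq⟩), huH ⟨q, hq⟩, sub_self]
    rw [h1] at h2
    exact h2
  have hmem : e (u - uH) ∈ Qᗮ := (Submodule.mem_orthogonal Q _).mpr hperp
  have hPz : ((Submodule.orthogonalProjection Q (e (u - uH))) : Hs) = 0 := by
    rw [Submodule.orthogonalProjectionOnto_apply_of_mem_orthogonal hmem]
    rfl
  have hperp' : ∀ q ∈ Q, (inner ℂ (e (u - uH)) q : ℂ) = 0 := by
    intro q hq
    rw [← inner_conj_symm, hperp q hq, map_zero]
  have hazz : a (u - uH) (u - uH)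
      = inner ℂ (e (u - uH)) (f - ((Submodule.orthogonalProjection Q f) : Hs)) := by
    rw [hsplit, hu (u - uH), hg (u - uH), hperp' g hgQ, sub_zero,
      inner_sub_right, hperp' _ (Submodule.orthogonalProjection Q f).2, sub_zero]
  set Z := ‖u - uH‖ with hZ
  set E := ‖e (u - uH)‖ with hE
  set F := ‖f - ((Submodule.orthogonalProjection Q f) : Hs)‖ with hF
  have hE0 : 0 ≤ E := norm_nonneg _
  have hZ0 : 0 ≤ Z := norm_nonneg _
  have hF0 : 0 ≤ F := norm_nonneg _
  have hmain : Z ^ 2 - 2 * κ ^ 2 * E ^ 2 ≤ E * F := by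
    have h := hre (u - uH)
    rw [hazz] at h
    calc Z ^ 2 - 2 * κ ^ 2 * E ^ 2
        = (inner ℂ (e (u - uH)) (f - ((Submodule.orthogonalProjection Q f) : Hs)) : ℂ).re := h.symm
      _ ≤ ‖(inner ℂ (e (u - uH)) (f - ((Submodule.orthogonalProjection Q f) : Hs)) : ℂ)‖ :=
          Complex.re_le_norm _
      _ ≤ E * F := norm_inner_le_norm _ _
  -- embedding: κ E ≤ Z
  have hκE : κ * E ≤ Z := by
    have h := hemb (u - uH)
    calc κ * E ≤ κ * (κ⁻¹ * Z) := by nlinarith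
      _ = Z := by field_simp
  have ht0 : 0 ≤ Z ^ 2 - κ ^ 2 * E ^ 2 := by nlinarith [mul_nonneg hκ.le hE0]
  set s := Real.sqrt (Z ^ 2 - κ ^ 2 * E ^ 2) with hs
  have hs0 : 0 ≤ s := Real.sqrt_nonneg _
  have hs2 : s ^ 2 = Z ^ 2 - κ ^ 2 * E ^ 2 := Real.sq_sqrt ht0
  set c := Hbar / Real.pi with hc
  have hc0 : 0 < c := by positivity
  have hEs : E ≤ c * s := by
    have h := happrox (u - uH)
    rwa [hPz, sub_zero] at h
  clear_value Z E F s c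
  -- resolution condition squared: κ² c² ≤ 1/2
  have hres2 : 2 * (κ * Hbar) ^ 2 ≤ Real.pi ^ 2 := by
    have h2 : (0:ℝ) < Real.sqrt 2 := Real.sqrt_pos.mpr (by norm_num)
    have h3 : κ * Hbar * Real.sqrt 2 ≤ Real.pi := by
      rw [← le_div_iff₀ h2]; exact hres
    have h4 : (Real.sqrt 2) ^ 2 = 2 := Real.sq_sqrt (by norm_num)
    nlinarith [mul_nonneg (mul_nonneg hκ.le hHbar.le) h2.le]
  have hcs : κ ^ 2 * c ^ 2 ≤ 1 / 2 := by
    have hceq : κ ^ 2 * c ^ 2 = (κ * Hbar) ^ 2 / Real.pi ^ 2 := by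
      rw [hc]; field_simp
    rw [hceq, div_le_iff₀ (by positivity : (0:ℝ) < Real.pi ^ 2)]
    linarith [hres2]
  -- κ²E² ≤ s²/2
  have hkE2 : κ ^ 2 * E ^ 2 ≤ 1 / 2 * s ^ 2 := by
    have a1 : κ * E ≤ κ * (c * s) := mul_le_mul_of_nonneg_left hEs hκ.le
    have a2 : (κ * E) ^ 2 ≤ (κ * (c * s)) ^ 2 :=
      pow_le_pow_left₀ (mul_nonneg hκ.le hE0) a1 2
    have a4 : (κ ^ 2 * c ^ 2) * s ^ 2 ≤ (1 / 2) * s ^ 2 :=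
      mul_le_mul_of_nonneg_right hcs (sq_nonneg s)
    nlinarith [a2, a4]
  have step2 : s ^ 2 ≤ 2 * (E * F) := by linarith [hmain, hs2, hkE2]
  have step3 : s ^ 2 ≤ 2 * (c * s * F) := by
    have h := mul_le_mul_of_nonneg_right hEs hF0
    linarith [step2, h]
  have step4 : s ^ 2 ≤ 4 * c ^ 2 * F ^ 2 := stmt_9_aux s c F hs0 hF0 step3
  have step5 : Z ^ 2 ≤ 6 * c ^ 2 * F ^ 2 := by linarith [hs2, hkE2, step4]
  have hRHS0 : 0 ≤ Real.sqrt 6 * c * F := by positivity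
  have h6 : (Real.sqrt 6) ^ 2 = 6 := Real.sq_sqrt (by norm_num)
  have hfin : Z ^ 2 ≤ (Real.sqrt 6 * c * F) ^ 2 := by
    have : (Real.sqrt 6 * c * F) ^ 2 = 6 * c ^ 2 * F ^ 2 := by
      rw [mul_pow, mul_pow, h6]
    rw [this]; exact step5
  have hZle : Z ≤ Real.sqrt 6 * c * F := by
    calc Z = Real.sqrt (Z ^ 2) := (Real.sqrt_sq hZ0).symm
      _ ≤ Real.sqrt ((Real.sqrt 6 * c * F) ^ 2) := Real.sqrt_le_sqrt hfin
      _ = Real.sqrt 6 * c * F := Real.sqrt_sq hRHS0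
  calc Z ≤ Real.sqrt 6 * c * F := hZle
    _ = Real.sqrt 6 / Real.pi * Hbar * F := by rw [hc]; ring
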